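/- arXiv:2506.15488 — 4 statements merged into one kernel-verified Lean document; each statement's English description precedes it below -/
import Mathlib

section
/- Let n be a positive integer and P ≥ 1 a real number. For any finite set F ⊆ {(i,j,k) ∈ {1,…,n}³ : i > j > k} with |F| ≥ n(n−1)(n−2)/(6P), one has |F| + 2|φ₁(F) ∪ φ₂(F) ∪ φ₃(F)| ≥ n(n−1)(n−2)/(6P) + 2(n(n−1)(n−2)/P)^{1/3}. -/
/-- **Lower bound on data accessed by a processor.**
Let `n` be a positive integer and `P ≥ 1` a real number. For any finite set
`F ⊆ {(i,j,k) ∈ {1,…,n}³ | i > j > k}` with `|F| ≥ n(n-1)(n-2)/(6P)`, one has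
`|F| + 2|φ₁(F) ∪ φ₂(F) ∪ φ₃(F)| ≥ n(n-1)(n-2)/(6P) + 2(n(n-1)(n-2)/P)^(1/3)`. -/
theorem data_access_lower_bound (n : ℕ) (hn : 0 < n) (P : ℝ) (hP : 1 ≤ P)
    (F : Finset (ℤ × ℤ × ℤ))
    (hF : ∀ p ∈ F, (1 ≤ p.1 ∧ p.1 ≤ n) ∧ (1 ≤ p.2.1 ∧ p.2.1 ≤ n) ∧
      (1 ≤ p.2.2 ∧ p.2.2 ≤ n) ∧ p.1 > p.2.1 ∧ p.2.1 > p.2.2)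
    (hcard : (F.card : ℝ) ≥ (n : ℝ) * ((n : ℝ) - 1) * ((n : ℝ) - 2) / (6 * P)) :
    (F.card : ℝ) +
      2 * (((F.image fun p => p.1) ∪ (F.image fun p => p.2.1) ∪
            (F.image fun p => p.2.2)).card : ℝ) ≥
      (n : ℝ) * ((n : ℝ) - 1) * ((n : ℝ) - 2) / (6 * P) +
        2 * ((n : ℝ) * ((n : ℝ) - 1) * ((n : ℝ) - 2) / P) ^ ((1 : ℝ) / 3) := by
  set S : Finset ℤ := (F.image fun p => p.1) ∪ (F.image fun p => p.2.1) ∪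
      (F.image fun p => p.2.2) with hS
  -- injective map into 3-element subsets of S
  have hmaps : ∀ p ∈ F, ({p.1, p.2.1, p.2.2} : Finset ℤ) ∈ S.powersetCard 3 := by
    intro p hp
    obtain ⟨_, _, _, h12, h23⟩ := hF p hp
    rw [Finset.mem_powersetCard]
    constructor
    · intro x hx
      simp only [Finset.mem_insert, Finset.mem_singleton] at hx
      simp only [hS, Finset.mem_union, Finset.mem_image]
      rcases hx with h | h | h
      · exact Or.inl (Or.inl ⟨p, hp, h.symm⟩)
      · exact Or.inl (Or.inr ⟨p, hp, h.symm⟩)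
      · exact Or.inr ⟨p, hp, h.symm⟩
    · rw [Finset.card_insert_of_notMem, Finset.card_insert_of_notMem,
        Finset.card_singleton]
      · simp only [Finset.mem_singleton]; omega
      · simp only [Finset.mem_insert, Finset.mem_singleton]; omega
  have hinj : Set.InjOn (fun p : ℤ × ℤ × ℤ => ({p.1, p.2.1, p.2.2} : Finset ℤ)) F := by
    intro p hp q hq h0
    have h : ({p.1, p.2.1, p.2.2} : Finset ℤ) = {q.1, q.2.1, q.2.2} := h0
    obtain ⟨_, _, _, hp12, hp23⟩ := hF p hp
    obtain ⟨_, _, _, hq12, hq23⟩ := hF q hq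
    have h1 : p.1 = q.1 ∨ p.1 = q.2.1 ∨ p.1 = q.2.2 := by
      have : p.1 ∈ ({q.1, q.2.1, q.2.2} : Finset ℤ) := h ▸ (by simp)
      simpa using this
    have h2 : p.2.1 = q.1 ∨ p.2.1 = q.2.1 ∨ p.2.1 = q.2.2 := by
      have : p.2.1 ∈ ({q.1, q.2.1, q.2.2} : Finset ℤ) := h ▸ (by simp)
      simpa using this
    have h3 : p.2.2 = q.1 ∨ p.2.2 = q.2.1 ∨ p.2.2 = q.2.2 := by
      have : p.2.2 ∈ ({q.1, q.2.1, q.2.2} : Finset ℤ) := h ▸ (by simp)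
      simpa using this
    have h4 : q.1 = p.1 ∨ q.1 = p.2.1 ∨ q.1 = p.2.2 := by
      have : q.1 ∈ ({p.1, p.2.1, p.2.2} : Finset ℤ) := h ▸ (by simp)
      simpa using this
    have h5 : q.2.1 = p.1 ∨ q.2.1 = p.2.1 ∨ q.2.1 = p.2.2 := by
      have : q.2.1 ∈ ({p.1, p.2.1, p.2.2} : Finset ℤ) := h ▸ (by simp)
      simpa using this
    have h6 : q.2.2 = p.1 ∨ q.2.2 = p.2.1 ∨ q.2.2 = p.2.2 := by
      have : q.2.2 ∈ ({p.1, p.2.1, p.2.2} : Finset ℤ) := h ▸ (by simp)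
      simpa using this
    have e1 : p.1 = q.1 := by omega
    have e2 : p.2.1 = q.2.1 := by omega
    have e3 : p.2.2 = q.2.2 := by omega
    exact Prod.ext e1 (Prod.ext e2 e3)
  have hcard1 : F.card ≤ S.card.choose 3 := by
    have := Finset.card_le_card_of_injOn _ hmaps hinj
    simpa [Finset.card_powersetCard] using this
  have hnat : 6 * F.card ≤ S.card ^ 3 := by
    have h1 : 6 * S.card.choose 3 ≤ S.card ^ 3 := by
      have h3 := Nat.descFactorial_le_pow S.card 3
      rw [Nat.descFactorial_eq_factorial_mul_choose] at h3
      norm_num [Nat.factorial] at h3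
      omega
    omega
  -- real side
  have hP0 : (0:ℝ) < P := lt_of_lt_of_le one_pos hP
  have hN0 : (0:ℝ) ≤ (n : ℝ) * ((n : ℝ) - 1) * ((n : ℝ) - 2) := by
    rcases Nat.lt_or_ge n 2 with h | h
    · interval_cases n <;> norm_num
    · have : (2:ℝ) ≤ (n:ℝ) := by exact_mod_cast h
      have h1 : (0:ℝ) ≤ (n:ℝ) - 1 := by linarith
      have h2 : (0:ℝ) ≤ (n:ℝ) - 2 := by linarith
      positivity
  have hle : (n : ℝ) * ((n : ℝ) - 1) * ((n : ℝ) - 2) / P ≤ ((S.card : ℝ)) ^ (3:ℕ) := by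
    have h1 : (6 * F.card : ℝ) ≤ ((S.card : ℝ)) ^ (3:ℕ) := by exact_mod_cast hnat
    have h2 : (n : ℝ) * ((n : ℝ) - 1) * ((n : ℝ) - 2) / P ≤ 6 * F.card := by
      rw [div_le_iff₀ hP0]
      rw [ge_iff_le, div_le_iff₀ (by positivity : (0:ℝ) < 6*P)] at hcard
      linarith
    linarith
  have hS0 : (0:ℝ) ≤ (S.card : ℝ) := Nat.cast_nonneg _
  have hkey : ((n : ℝ) * ((n : ℝ) - 1) * ((n : ℝ) - 2) / P) ^ ((1:ℝ)/3) ≤ (S.card : ℝ) := by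
    have h1 := Real.rpow_le_rpow (by positivity) hle (by norm_num : (0:ℝ) ≤ 1/3)
    calc ((n : ℝ) * ((n : ℝ) - 1) * ((n : ℝ) - 2) / P) ^ ((1:ℝ)/3)
        ≤ (((S.card : ℝ)) ^ (3:ℕ)) ^ ((1:ℝ)/3) := h1
      _ = (S.card : ℝ) := by
          rw [← Real.rpow_natCast (S.card : ℝ) 3, ← Real.rpow_mul hS0]
          norm_num
  linarith
end

section
/- Let n be a positive integer and P ≥ 1 a real number. For any finite set F ⊆ {(i,j,k) ∈ {1,…,n}³ : i > j > k} with |F| ≥ n(n−1)(n−2)/(6P), and any real number D with D ≤ n(n−1)(n−2)/(6P) + 2n/P, one has |F| + 2|φ₁(F) ∪ φ₂(F) ∪ φ₃(F)| − D ≥ 2(n(n−1)(n−2)/P)^{1/3} − 2n/P. -/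
/-- **Communication lower bound (Theorem 5.1 / `thm:memindeplb`).**
Let `n` be a positive integer and `P ≥ 1` a real number. For any finite set
`F ⊆ {(i,j,k) ∈ {1,…,n}³ | i > j > k}` with `|F| ≥ n(n-1)(n-2)/(6P)`, and any
real `D ≤ n(n-1)(n-2)/(6P) + 2n/P`, one has
`|F| + 2|φ₁(F) ∪ φ₂(F) ∪ φ₃(F)| - D ≥ 2(n(n-1)(n-2)/P)^(1/3) - 2n/P`. -/
theorem communication_lower_bound (n : ℕ) (hn : 0 < n) (P : ℝ) (hP : 1 ≤ P)
    (F : Finset (ℤ × ℤ × ℤ))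
    (hF : ∀ p ∈ F, (1 ≤ p.1 ∧ p.1 ≤ n) ∧ (1 ≤ p.2.1 ∧ p.2.1 ≤ n) ∧
      (1 ≤ p.2.2 ∧ p.2.2 ≤ n) ∧ p.1 > p.2.1 ∧ p.2.1 > p.2.2)
    (hcard : (F.card : ℝ) ≥ (n : ℝ) * ((n : ℝ) - 1) * ((n : ℝ) - 2) / (6 * P))
    (D : ℝ)
    (hD : D ≤ (n : ℝ) * ((n : ℝ) - 1) * ((n : ℝ) - 2) / (6 * P) + 2 * n / P) :
    (F.card : ℝ) +
      2 * (((F.image fun p => p.1) ∪ (F.image fun p => p.2.1) ∪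
            (F.image fun p => p.2.2)).card : ℝ) - D ≥
      2 * ((n : ℝ) * ((n : ℝ) - 1) * ((n : ℝ) - 2) / P) ^ ((1 : ℝ) / 3) -
        2 * n / P := by
  set U : Finset ℤ := (F.image fun p => p.1) ∪ (F.image fun p => p.2.1) ∪
      (F.image fun p => p.2.2) with hU
  set v : ℕ := U.card with hv
  have hPpos : (0 : ℝ) < P := lt_of_lt_of_le one_pos hP
  -- the injection into 3-element subsets of U
  have hinj : (F.card : ℝ) ≤ ((U.powersetCard 3).card : ℝ) := by
    have := Finset.card_le_card_of_injOn
      (f := fun p : ℤ × ℤ × ℤ => ({p.1, p.2.1, p.2.2} : Finset ℤ))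
      (s := F) (t := U.powersetCard 3)
      (by
        intro p hp
        obtain ⟨⟨h1, h2⟩, ⟨h3, h4⟩, ⟨h5, h6⟩, h7, h8⟩ := hF p hp
        rw [Finset.mem_coe, Finset.mem_powersetCard]
        constructor
        · intro x hx
          simp only [Finset.mem_insert, Finset.mem_singleton] at hx
          rcases hx with rfl | rfl | rfl
          · exact Finset.mem_union_left _ (Finset.mem_union_left _
              (Finset.mem_image_of_mem _ hp))
          · exact Finset.mem_union_left _ (Finset.mem_union_right _
              (Finset.mem_image_of_mem _ hp))
          · exact Finset.mem_union_right _ (Finset.mem_image_of_mem _ hp)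
        · rw [Finset.card_insert_of_notMem, Finset.card_insert_of_notMem,
            Finset.card_singleton]
          · simp only [Finset.mem_singleton]; omega
          · simp only [Finset.mem_insert, Finset.mem_singleton]; omega)
      (by
        intro p hp q hq hpq
        obtain ⟨_, _, _, hp7, hp8⟩ := hF p hp
        obtain ⟨_, _, _, hq7, hq8⟩ := hF q hq
        replace hpq : ({p.1, p.2.1, p.2.2} : Finset ℤ) = {q.1, q.2.1, q.2.2} := hpq
        have m1 : p.1 ∈ ({q.1, q.2.1, q.2.2} : Finset ℤ) := by
          rw [← hpq]; simp
        have m2 : p.2.1 ∈ ({q.1, q.2.1, q.2.2} : Finset ℤ) := by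
          rw [← hpq]; simp
        have m3 : p.2.2 ∈ ({q.1, q.2.1, q.2.2} : Finset ℤ) := by
          rw [← hpq]; simp
        have m4 : q.1 ∈ ({p.1, p.2.1, p.2.2} : Finset ℤ) := by
          rw [hpq]; simp
        simp only [Finset.mem_insert, Finset.mem_singleton] at m1 m2 m3 m4
        have e1 : p.1 = q.1 := by omega
        have e2 : p.2.1 = q.2.1 := by omega
        have e3 : p.2.2 = q.2.2 := by omega
        exact Prod.ext e1 (Prod.ext e2 e3))
    exact_mod_cast this
  have hchoose : ((U.powersetCard 3).card : ℝ) ≤ (v : ℝ) ^ 3 / 6 := by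
    rw [Finset.card_powersetCard]
    have := Nat.choose_le_pow_div (α := ℝ) 3 v
    simpa [Nat.factorial] using this
  -- nonnegativity of n(n-1)(n-2)
  have hnum : (0 : ℝ) ≤ (n : ℝ) * ((n : ℝ) - 1) * ((n : ℝ) - 2) := by
    rcases le_or_gt n 2 with h | h
    · interval_cases n <;> norm_num
    · have h2 : (2 : ℝ) ≤ (n : ℝ) := by exact_mod_cast h.le
      have h0 : (0:ℝ) ≤ (n:ℝ) := Nat.cast_nonneg n
      exact mul_nonneg (mul_nonneg h0 (by linarith)) (by linarith)
  set a : ℝ := (n : ℝ) * ((n : ℝ) - 1) * ((n : ℝ) - 2) / P with ha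
  have hanonneg : 0 ≤ a := div_nonneg hnum hPpos.le
  have hle : a ≤ (v : ℝ) ^ 3 := by
    have h6 : (n : ℝ) * ((n : ℝ) - 1) * ((n : ℝ) - 2) / (6 * P) = a / 6 := by
      rw [ha, div_div, mul_comm P 6]
    rw [h6] at hcard
    have := hinj.trans hchoose
    linarith [hcard.trans this]
  have hroot : a ^ ((1 : ℝ) / 3) ≤ (v : ℝ) := by
    have h1 : a ^ ((1 : ℝ) / 3) ≤ ((v : ℝ) ^ 3) ^ ((1 : ℝ) / 3) :=
      Real.rpow_le_rpow hanonneg hle (by norm_num)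
    have h2 : ((v : ℝ) ^ 3) ^ ((1 : ℝ) / 3) = (v : ℝ) := by
      rw [← Real.rpow_natCast (v : ℝ) 3, ← Real.rpow_mul (Nat.cast_nonneg v)]
      norm_num
    rwa [h2] at h1
  have := hcard
  linarith [hroot, hcard, hD]
end

section
/- Let G = (X, Y, E) be a finite bipartite graph and d a positive integer. If d·|W| ≤ |N_G(W)| for every subset W ⊆ X, where N_G(W) denotes the set of vertices in Y adjacent to at least one vertex of W, then there exist d matchings M₁, …, M_d in G, each of which saturates every vertex of X, such that the sets of Y-vertices covered by distinct matchings are pairwise disjoint (so in particular the matchings are pairwise edge-disjoint and each covers exactly |X| distinct vertices of Y). -/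
open scoped Classical in
/-- **`d`-fold Hall's theorem (Corollary 6.7 / `cor:hall:dgraphformulation`).**
Let `G = (X, Y, E)` be a finite bipartite graph (encoded by the adjacency
relation `E : X → Y → Prop`) and `d` a positive integer. If
`d·|W| ≤ |N_G(W)|` for every `W ⊆ X`, then there exist `d` matchings
(encoded as injective functions `f i : X → Y` whose graphs consist of edges),
each saturating `X`, whose sets of covered `Y`-vertices are pairwise
disjoint (so in particular the matchings are pairwise edge-disjoint and each
covers exactly `|X|` distinct vertices of `Y`). -/
theorem d_disjoint_matchings_of_hall {X Y : Type*} [Fintype X] [Fintype Y]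
    (E : X → Y → Prop) (d : ℕ) (hd : 0 < d)
    (hall : ∀ W : Finset X,
      d * W.card ≤ (Finset.univ.filter fun y => ∃ x ∈ W, E x y).card) :
    ∃ f : Fin d → X → Y,
      (∀ i, Function.Injective (f i)) ∧
      (∀ i x, E x (f i x)) ∧
      (∀ i j x x', i ≠ j → f i x ≠ f j x') := by
  classical
  have key := (Fintype.all_card_le_filter_rel_iff_exists_injective
      (fun (a : X × Fin d) (y : Y) => E a.1 y)).mp ?_
  · obtain ⟨g, hg, hgr⟩ := key
    refine ⟨fun i x => g (x, i), ?_, fun i x => hgr (x, i), ?_⟩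
    · intro i x x' h
      have := hg h
      exact (Prod.mk.injEq _ _ _ _).mp this |>.1
    · intro i j x x' hij h
      have := hg h
      exact hij ((Prod.mk.injEq _ _ _ _).mp this).2
  · intro A
    set W : Finset X := A.image Prod.fst with hW
    have hsub : A ⊆ W ×ˢ (Finset.univ : Finset (Fin d)) := by
      intro a ha
      simp [hW, Finset.mem_product]
      exact ⟨a.2, by simpa using ha⟩
    calc A.card ≤ (W ×ˢ (Finset.univ : Finset (Fin d))).card := Finset.card_le_card hsub
      _ = d * W.card := by simp [Finset.card_product, Nat.mul_comm]
      _ ≤ (Finset.univ.filter fun y => ∃ x ∈ W, E x y).card := hall W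
      _ = (Finset.univ.filter fun y => ∃ a ∈ A, E a.1 y).card := by
          congr 1
          ext y
          simp [hW]
      _ ≤ _ := le_refl _
end

section
/- Let q be a prime power and α ≥ 1 an integer, let K = 𝔽_{q^α} be the field with q^α elements containing the subfield F = 𝔽_q with q elements, and let S ⊆ P¹(K) be the image of the natural inclusion of P¹(F) into P¹(K). Then the orbit {g·S : g ∈ PGL₂(K)} of S under the action of PGL₂(K) is a Steiner (q^α+1, q+1, 3) system on the (q^α+1)-element set P¹(K). -/
open scoped LinearAlgebra.Projectivization
open Projectivization

namespace SphAux

variable {K : Type*} [Field K]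

/-- cross product of two vectors in K² -/
def cross (u v : K × K) : K := u.1 * v.2 - u.2 * v.1

lemma mk_eq_mk_iff_cross (u v : K × K) (hu : u ≠ 0) (hv : v ≠ 0) :
    Projectivization.mk K u hu = Projectivization.mk K v hv ↔ cross u v = 0 := by
  rw [mk_eq_mk_iff]
  constructor
  · rintro ⟨a, ha⟩
    have h1 : u.1 = (a : K) * v.1 := by rw [← ha]; rfl
    have h2 : u.2 = (a : K) * v.2 := by rw [← ha]; rfl
    simp [cross, h1, h2]; ring
  · intro h
    rcases eq_or_ne v.1 0 with h1 | h1
    · have hv2 : v.2 ≠ 0 := by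
        intro h2; exact hv (Prod.ext h1 h2)
      have hu1 : u.1 = 0 := by
        have := h; simp [cross, h1] at this
        rcases this with h' | h'
        · exact h'
        · exact absurd h' hv2
      have hu2 : u.2 ≠ 0 := fun h2 => hu (Prod.ext hu1 h2)
      refine ⟨Units.mk0 (u.2 / v.2) (div_ne_zero hu2 hv2), ?_⟩
      have : (u.2 / v.2) • v = u := by
        apply Prod.ext
        · simp [smul_eq_mul, h1, hu1]
        · simp [smul_eq_mul]; field_simp
      exact this
    · have hu1 : u.1 ≠ 0 := by
        intro h0
        have := h; simp [cross, h0] at this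
        rcases this with h' | h'
        · exact hu (Prod.ext h0 h')
        · exact h1 h'
      refine ⟨Units.mk0 (u.1 / v.1) (div_ne_zero hu1 h1), ?_⟩
      have : (u.1 / v.1) • v = u := by
        apply Prod.ext
        · simp [smul_eq_mul]; field_simp
        · simp only [Prod.smul_snd, smul_eq_mul]
          simp [cross, sub_eq_zero] at h
          field_simp
          linear_combination h
      exact this




variable {K : Type*} [Field K]

/-- explicit linear automorphism of K² given by an invertible 2×2 matrix -/
def lmat (a b c d : K) (h : a * d - b * c ≠ 0) : (K × K) ≃ₗ[K] (K × K) where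
  toFun p := (a * p.1 + b * p.2, c * p.1 + d * p.2)
  map_add' p q := by
    simp only [Prod.fst_add, Prod.snd_add, Prod.mk_add_mk, Prod.mk.injEq]
    constructor <;> ring
  map_smul' m p := by
    simp only [Prod.smul_fst, Prod.smul_snd, smul_eq_mul, RingHom.id_apply, Prod.smul_mk,
      Prod.mk.injEq]
    constructor <;> ring
  invFun p := ((d * p.1 - b * p.2) / (a * d - b * c), (a * p.2 - c * p.1) / (a * d - b * c))
  left_inv p := by
    rw [Prod.ext_iff]
    constructor <;> (simp only []; rw [div_eq_iff h]; ring)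
  right_inv p := by
    rw [Prod.ext_iff]
    constructor <;> (simp only []; rw [mul_div_assoc', mul_div_assoc', ← add_div, div_eq_iff h]; ring)

lemma lmat_apply (a b c d : K) (h : a * d - b * c ≠ 0) (p : K × K) :
    lmat a b c d h p = (a * p.1 + b * p.2, c * p.1 + d * p.2) := rfl

/-- the projective map induced by a linear automorphism -/
def pmap (g : (K × K) ≃ₗ[K] (K × K)) : ℙ K (K × K) → ℙ K (K × K) :=
  Projectivization.map g.toLinearMap g.injective

lemma pmap_mk (g : (K × K) ≃ₗ[K] (K × K)) (v : K × K) (hv : v ≠ 0) :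
    pmap g (Projectivization.mk K v hv) =
      Projectivization.mk K (g v) (by simp [hv]) := by
  exact map_mk g.toLinearMap g.injective v hv

lemma pmap_trans (g h : (K × K) ≃ₗ[K] (K × K)) (x : ℙ K (K × K)) :
    pmap h (pmap g x) = pmap (g ≪≫ₗ h) x := by
  induction x using Projectivization.ind with
  | h v hv => simp [pmap_mk]

lemma pmap_symm (g : (K × K) ≃ₗ[K] (K × K)) (x : ℙ K (K × K)) :
    pmap g.symm (pmap g x) = x := by
  induction x using Projectivization.ind with
  | h v hv => simp [pmap_mk]

lemma pmap_symm' (g : (K × K) ≃ₗ[K] (K × K)) (x : ℙ K (K × K)) :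
    pmap g (pmap g.symm x) = x := by
  induction x using Projectivization.ind with
  | h v hv => simp [pmap_mk]

lemma pmap_injective (g : (K × K) ≃ₗ[K] (K × K)) : Function.Injective (pmap g) :=
  Function.LeftInverse.injective (pmap_symm g)

def pinf : ℙ K (K × K) := Projectivization.mk K (1, 0) (by simp)
def pzero : ℙ K (K × K) := Projectivization.mk K (0, 1) (by simp)
def pone : ℙ K (K × K) := Projectivization.mk K (1, 1) (by simp)


end SphAux

namespace SphAux
variable {K : Type*} [Field K]

/-- sharp 3-transitivity: an automorphism fixing ∞, 0, 1 is projectively trivial -/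
lemma sharp (g : (K × K) ≃ₗ[K] (K × K)) (h1 : pmap g pinf = pinf)
    (h2 : pmap g pzero = pzero) (h3 : pmap g pone = pone) (x : ℙ K (K × K)) :
    pmap g x = x := by
  set u : K × K := g (1, 0) with hu
  set v : K × K := g (0, 1) with hv
  have hune : u ≠ 0 := by simp [hu]
  have hvne : v ≠ 0 := by simp [hv]
  rw [pinf, pmap_mk, mk_eq_mk_iff_cross] at h1
  rw [pzero, pmap_mk, mk_eq_mk_iff_cross] at h2
  rw [pone, pmap_mk, mk_eq_mk_iff_cross] at h3
  have hu2 : u.2 = 0 := by simpa [cross, hu] using h1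
  have hv1 : v.1 = 0 := by simpa [cross, hv] using h2
  have hadd : g (1, 1) = u + v := by
    rw [hu, hv, ← map_add]; norm_num
  have h11 : (g (1, 1)).1 = (g (1, 1)).2 := by
    simp [cross, sub_eq_zero] at h3
    simpa using h3
  have huv : u.1 = v.2 := by
    rw [hadd] at h11
    simpa [Prod.fst_add, Prod.snd_add, hu2, hv1] using h11
  have hu1 : u.1 ≠ 0 := fun h0 => hune (Prod.ext h0 hu2)
  have key : ∀ t : K × K, g t = u.1 • t := by
    intro t
    have ht : t = t.1 • ((1 : K), (0 : K)) + t.2 • ((0 : K), (1 : K)) := by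
      simp [Prod.ext_iff]
    rw [ht, map_add, map_smul, map_smul, ← hu, ← hv]
    apply Prod.ext
    · simp [hv1, smul_eq_mul]; ring
    · simp [hu2, huv, smul_eq_mul]; ring
  induction x using Projectivization.ind with
  | h t ht =>
    rw [pmap_mk, mk_eq_mk_iff_cross]
    simp [cross, key t, smul_eq_mul]
    ring


/-- the image of P1(F) in P1(K) -/
def SF (F : Subfield K) : Set (ℙ K (K × K)) :=
  {x | ∃ (v : K × K) (hv : v ≠ 0), v.1 ∈ F ∧ v.2 ∈ F ∧ x = Projectivization.mk K v hv}

lemma pinf_mem (F : Subfield K) : (pinf : ℙ K (K × K)) ∈ SF F :=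
  ⟨(1, 0), by simp, one_mem F, zero_mem F, rfl⟩

lemma pzero_mem (F : Subfield K) : (pzero : ℙ K (K × K)) ∈ SF F :=
  ⟨(0, 1), by simp, zero_mem F, one_mem F, rfl⟩

lemma pone_mem (F : Subfield K) : (pone : ℙ K (K × K)) ∈ SF F :=
  ⟨(1, 1), by simp, one_mem F, one_mem F, rfl⟩

lemma pmap_image_SF (F : Subfield K) {a b c d : K} (ha : a ∈ F) (hb : b ∈ F)
    (hc : c ∈ F) (hd : d ∈ F) (h : a * d - b * c ≠ 0) :
    pmap (lmat a b c d h) '' SF F = SF F := by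
  apply Set.Subset.antisymm
  · rintro x ⟨y, ⟨t, htne, ht1, ht2, rfl⟩, rfl⟩
    rw [pmap_mk]
    refine ⟨lmat a b c d h t, _, ?_, ?_, rfl⟩
    · show a * t.1 + b * t.2 ∈ F
      exact add_mem (mul_mem ha ht1) (mul_mem hb ht2)
    · show c * t.1 + d * t.2 ∈ F
      exact add_mem (mul_mem hc ht1) (mul_mem hd ht2)
  · rintro x ⟨t, htne, ht1, ht2, rfl⟩
    have hls : lmat a b c d h (d * t.1 - b * t.2, a * t.2 - c * t.1)
        = (a * d - b * c) • t := by
      rw [lmat_apply]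
      apply Prod.ext <;> (simp [smul_eq_mul]; ring)
    have hsne : (d * t.1 - b * t.2, a * t.2 - c * t.1) ≠ (0 : K × K) := by
      intro h0
      have h1 : (a * d - b * c) • t = 0 := by rw [← hls, h0, map_zero]
      rcases smul_eq_zero.mp h1 with h' | h'
      · exact h h'
      · exact htne h'
    refine ⟨Projectivization.mk K _ hsne,
      ⟨_, hsne, sub_mem (mul_mem hd ht1) (mul_mem hb ht2),
        sub_mem (mul_mem ha ht2) (mul_mem hc ht1), rfl⟩, ?_⟩
    rw [pmap_mk, mk_eq_mk_iff_cross, hls]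
    simp [cross, smul_eq_mul]
    ring

lemma exists_lmat (u v w : K × K) (hu : u ≠ 0) (hv : v ≠ 0) (hw : w ≠ 0)
    (huv : cross u v ≠ 0) (hwv : cross w v ≠ 0) (huw : cross u w ≠ 0) :
    ∃ (a b c d : K) (h : a * d - b * c ≠ 0),
      pmap (lmat a b c d h) pinf = Projectivization.mk K u hu ∧
      pmap (lmat a b c d h) pzero = Projectivization.mk K v hv ∧
      pmap (lmat a b c d h) pone = Projectivization.mk K w hw ∧
      ∀ F : Subfield K, u.1 ∈ F → u.2 ∈ F → v.1 ∈ F → v.2 ∈ F → w.1 ∈ F → w.2 ∈ F →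
        a ∈ F ∧ b ∈ F ∧ c ∈ F ∧ d ∈ F := by
  have hdet : (cross w v * u.1) * (cross u w * v.2) - (cross u w * v.1) * (cross w v * u.2)
      = cross w v * cross u w * cross u v := by
    simp only [cross]; ring
  refine ⟨cross w v * u.1, cross u w * v.1, cross w v * u.2, cross u w * v.2,
    by rw [hdet]; exact mul_ne_zero (mul_ne_zero hwv huw) huv, ?_, ?_, ?_, ?_⟩
  · rw [pinf, pmap_mk, mk_eq_mk_iff_cross, lmat_apply]
    simp only [cross]
    ring
  · rw [pzero, pmap_mk, mk_eq_mk_iff_cross, lmat_apply]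
    simp only [cross]
    ring
  · rw [pone, pmap_mk, mk_eq_mk_iff_cross, lmat_apply]
    simp only [cross]
    ring
  · intro F h1 h2 h3 h4 h5 h6
    have hc1 : cross w v ∈ F := sub_mem (mul_mem h5 h4) (mul_mem h6 h3)
    have hc2 : cross u w ∈ F := sub_mem (mul_mem h1 h6) (mul_mem h2 h5)
    exact ⟨mul_mem hc1 h1, mul_mem hc2 h3, mul_mem hc1 h2, mul_mem hc2 h4⟩

lemma ne_mk_cross (u v : K × K) (hu : u ≠ 0) (hv : v ≠ 0)
    (h : Projectivization.mk K u hu ≠ Projectivization.mk K v hv) : cross u v ≠ 0 :=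
  fun hc => h ((mk_eq_mk_iff_cross u v hu hv).mpr hc)

/-- 3-transitivity: existence -/
lemma exists_pmap (x y z : ℙ K (K × K)) (hxy : x ≠ y) (hxz : x ≠ z) (hyz : y ≠ z) :
    ∃ g : (K × K) ≃ₗ[K] (K × K),
      pmap g pinf = x ∧ pmap g pzero = y ∧ pmap g pone = z := by
  obtain ⟨a, b, c, d, h, h1, h2, h3, -⟩ :=
    exists_lmat x.rep y.rep z.rep x.rep_nonzero y.rep_nonzero z.rep_nonzero
      (ne_mk_cross _ _ _ _ (by rw [x.mk_rep, y.mk_rep]; exact hxy))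
      (ne_mk_cross _ _ _ _ (by rw [z.mk_rep, y.mk_rep]; exact hyz.symm))
      (ne_mk_cross _ _ _ _ (by rw [x.mk_rep, z.mk_rep]; exact hxz))
  exact ⟨lmat a b c d h, by rwa [x.mk_rep] at h1, by rwa [y.mk_rep] at h2,
    by rwa [z.mk_rep] at h3⟩

/-- 3-transitivity within SF, preserving SF -/
lemma exists_pmap_SF (F : Subfield K) (x y z : ℙ K (K × K))
    (hxy : x ≠ y) (hxz : x ≠ z) (hyz : y ≠ z)
    (hx : x ∈ SF F) (hy : y ∈ SF F) (hz : z ∈ SF F) :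
    ∃ g : (K × K) ≃ₗ[K] (K × K),
      pmap g pinf = x ∧ pmap g pzero = y ∧ pmap g pone = z ∧
      pmap g '' SF F = SF F := by
  obtain ⟨u, hune, hu1, hu2, rfl⟩ := hx
  obtain ⟨v, hvne, hv1, hv2, rfl⟩ := hy
  obtain ⟨w, hwne, hw1, hw2, rfl⟩ := hz
  obtain ⟨a, b, c, d, h, h1, h2, h3, hmem⟩ :=
    exists_lmat u v w hune hvne hwne
      (ne_mk_cross _ _ _ _ hxy)
      (ne_mk_cross _ _ _ _ hyz.symm)
      (ne_mk_cross _ _ _ _ hxz)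
  obtain ⟨ha, hb, hc, hd⟩ := hmem F hu1 hu2 hv1 hv2 hw1 hw2
  exact ⟨lmat a b c d h, h1, h2, h3, pmap_image_SF F ha hb hc hd h⟩

/-- uniqueness: two blocks through three common points coincide -/
lemma blocks_eq (F : Subfield K) (g1 g2 : (K × K) ≃ₗ[K] (K × K))
    (t1 t2 t3 : ℙ K (K × K)) (h12 : t1 ≠ t2) (h13 : t1 ≠ t3) (h23 : t2 ≠ t3)
    (hT1 : t1 ∈ pmap g1 '' SF F ∧ t2 ∈ pmap g1 '' SF F ∧ t3 ∈ pmap g1 '' SF F)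
    (hT2 : t1 ∈ pmap g2 '' SF F ∧ t2 ∈ pmap g2 '' SF F ∧ t3 ∈ pmap g2 '' SF F) :
    pmap g1 '' SF F = pmap g2 '' SF F := by
  -- build for each i an automorphism phi_i with pmap phi_i pinf = t1 etc and
  -- pmap phi_i '' SF F = pmap g_i '' SF F
  have key : ∀ g : (K × K) ≃ₗ[K] (K × K),
      t1 ∈ pmap g '' SF F → t2 ∈ pmap g '' SF F → t3 ∈ pmap g '' SF F →
      ∃ φ : (K × K) ≃ₗ[K] (K × K),
        pmap φ pinf = t1 ∧ pmap φ pzero = t2 ∧ pmap φ pone = t3 ∧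
        pmap φ '' SF F = pmap g '' SF F := by
    intro g hg1 hg2 hg3
    obtain ⟨s1, hs1, hgs1⟩ := hg1
    obtain ⟨s2, hs2, hgs2⟩ := hg2
    obtain ⟨s3, hs3, hgs3⟩ := hg3
    have hinj := pmap_injective g
    have hs12 : s1 ≠ s2 := fun e => h12 (by rw [← hgs1, ← hgs2, e])
    have hs13 : s1 ≠ s3 := fun e => h13 (by rw [← hgs1, ← hgs3, e])
    have hs23 : s2 ≠ s3 := fun e => h23 (by rw [← hgs2, ← hgs3, e])
    obtain ⟨hgl, e1, e2, e3, himg⟩ := exists_pmap_SF F s1 s2 s3 hs12 hs13 hs23 hs1 hs2 hs3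
    refine ⟨hgl ≪≫ₗ g, ?_, ?_, ?_, ?_⟩
    · rw [← pmap_trans, e1, hgs1]
    · rw [← pmap_trans, e2, hgs2]
    · rw [← pmap_trans, e3, hgs3]
    · rw [show pmap (hgl ≪≫ₗ g) '' SF F = pmap g '' (pmap hgl '' SF F) by
        rw [Set.image_image]; exact Set.image_congr fun x _ => (pmap_trans hgl g x).symm,
        himg]
  obtain ⟨φ1, a1, b1, c1, d1⟩ := key g1 hT1.1 hT1.2.1 hT1.2.2
  obtain ⟨φ2, a2, b2, c2, d2⟩ := key g2 hT2.1 hT2.2.1 hT2.2.2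
  have hfix : ∀ p, pmap (φ1 ≪≫ₗ φ2.symm) p = p := by
    apply sharp
    · rw [← pmap_trans, a1, ← a2, pmap_symm]
    · rw [← pmap_trans, b1, ← b2, pmap_symm]
    · rw [← pmap_trans, c1, ← c2, pmap_symm]
  have hpt : ∀ p, pmap φ1 p = pmap φ2 p := by
    intro p
    have := hfix p
    rw [← pmap_trans] at this
    calc pmap φ1 p = pmap φ2 (pmap φ2.symm (pmap φ1 p)) := (pmap_symm' φ2 _).symm
    _ = pmap φ2 p := by rw [this]
  rw [← d1, ← d2]
  exact Set.image_congr fun x _ => hpt x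

/-- cardinality of the projective line -/
lemma bij_option : Function.Bijective (fun o : Option K =>
    Option.elim o pinf (fun x => Projectivization.mk K (x, 1) (by simp))) := by
  constructor
  · intro o1 o2 he
    match o1, o2 with
    | none, none => rfl
    | none, some x =>
      exfalso
      simp only [Option.elim] at he
      rw [pinf, mk_eq_mk_iff_cross] at he
      simp [cross] at he
    | some x, none =>
      exfalso
      simp only [Option.elim] at he
      rw [pinf, mk_eq_mk_iff_cross] at he
      simp [cross] at he
    | some x, some y =>
      simp only [Option.elim] at he
      rw [mk_eq_mk_iff_cross] at he
      simp [cross, sub_eq_zero] at he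
      rw [he]
  · intro p
    induction p using Projectivization.ind with
    | h v hv =>
      rcases eq_or_ne v.2 0 with h2 | h2
      · refine ⟨none, ?_⟩
        simp only [Option.elim]
        rw [pinf, mk_eq_mk_iff_cross]
        simp [cross, h2]
      · refine ⟨some (v.1 / v.2), ?_⟩
        simp only [Option.elim]
        rw [mk_eq_mk_iff_cross]
        simp [cross]
        field_simp
        ring

/-- SF F is the range of an injection from Option F -/
lemma SF_eq_range (F : Subfield K) : SF F = Set.range (fun o : Option F =>
    Option.elim o pinf (fun x => Projectivization.mk K ((x : K), 1) (by simp))) := by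
  apply Set.Subset.antisymm
  · rintro x ⟨v, hvne, hv1, hv2, rfl⟩
    rcases eq_or_ne v.2 0 with h2 | h2
    · refine ⟨none, ?_⟩
      simp only [Option.elim]
      rw [pinf, mk_eq_mk_iff_cross]
      simp [cross, h2]
    · refine ⟨some ⟨v.1 / v.2, F.div_mem hv1 hv2⟩, ?_⟩
      simp only [Option.elim]
      rw [mk_eq_mk_iff_cross]
      simp [cross]
      field_simp
      ring
  · rintro x ⟨o, rfl⟩
    match o with
    | none => exact pinf_mem F
    | some y => exact ⟨((y : K), 1), by simp, y.2, one_mem F, rfl⟩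

lemma inj_option_F (F : Subfield K) : Function.Injective (fun o : Option F =>
    Option.elim o pinf (fun x => Projectivization.mk K ((x : K), 1) (by simp))) := by
  intro o1 o2 he
  match o1, o2 with
  | none, none => rfl
  | none, some x =>
    exfalso
    simp only [Option.elim] at he
    rw [pinf, mk_eq_mk_iff_cross] at he
    simp [cross] at he
  | some x, none =>
    exfalso
    simp only [Option.elim] at he
    rw [pinf, mk_eq_mk_iff_cross] at he
    simp [cross] at he
  | some x, some y =>
    simp only [Option.elim] at he
    rw [mk_eq_mk_iff_cross] at he
    simp [cross, sub_eq_zero] at he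
    rw [he]

end SphAux

open SphAux

/-- **Spherical geometries give Steiner systems
(Theorem 6.6 / `thm:sphericalDesigns`).**
Let `q = p^k` be a prime power and `α ≥ 1`, let `K` be the finite field with
`q^α` elements and `F ⊆ K` its subfield with `q` elements, and let
`S ⊆ ℙ¹(K) = ℙ K (K × K)` be the natural inclusion of `ℙ¹(F)` (the points
spanned by vectors with both coordinates in `F`). Then the orbit of `S`
under the action of `PGL₂(K)` (equivalently, the set of images of `S` under
projectivized linear automorphisms of `K²`, since scalars act trivially) is a
Steiner `(q^α + 1, q + 1, 3)` system on the `(q^α + 1)`-element set `ℙ¹(K)`: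
every block has `q + 1` elements and every `3`-element subset of `ℙ¹(K)` is
contained in exactly one block. -/
theorem spherical_geometry_steiner_system
    (q α : ℕ) (hq : ∃ p k : ℕ, p.Prime ∧ 0 < k ∧ q = p ^ k) (hα : 1 ≤ α)
    (K : Type*) [Field K] [Finite K] (hK : Nat.card K = q ^ α)
    (F : Subfield K) (hF : Nat.card F = q)
    (S : Set (ℙ K (K × K)))
    (hS : S = {x : ℙ K (K × K) |
      ∃ (v : K × K) (hv : v ≠ 0), v.1 ∈ F ∧ v.2 ∈ F ∧
        x = Projectivization.mk K v hv})
    (Sys : Set (Set (ℙ K (K × K))))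
    (hSys : Sys = {T : Set (ℙ K (K × K)) |
      ∃ g : (K × K) ≃ₗ[K] (K × K),
        T = Projectivization.map g.toLinearMap g.injective '' S}) :
    Nat.card (ℙ K (K × K)) = q ^ α + 1 ∧
    (∀ B ∈ Sys, B.ncard = q + 1) ∧
    (∀ T : Set (ℙ K (K × K)), T.ncard = 3 → ∃! B, B ∈ Sys ∧ T ⊆ B) := by
  have hSF : S = SF F := hS
  subst hSys
  refine ⟨?_, ?_, ?_⟩
  · -- cardinality of the projective line
    rw [← Nat.card_eq_of_bijective _ (bij_option (K := K)), Finite.card_option, hK]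
  · -- every block has q + 1 points
    rintro B ⟨g, rfl⟩
    have himg : Projectivization.map g.toLinearMap g.injective '' S = pmap g '' SF F := by
      rw [hSF]; rfl
    rw [himg, Set.ncard_image_of_injective _ (pmap_injective g), SF_eq_range F,
      ← Nat.card_coe_set_eq, Nat.card_range_of_injective (inj_option_F F),
      Finite.card_option, hF]
  · -- every 3 points lie in a unique block
    intro T hT
    obtain ⟨t1, t2, t3, h12, h13, h23, rfl⟩ := Set.ncard_eq_three.mp hT
    obtain ⟨g, hg1, hg2, hg3⟩ := exists_pmap t1 t2 t3 h12 h13 h23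
    have hTsub : {t1, t2, t3} ⊆ pmap g '' SF F := by
      rintro x hx
      rcases hx with rfl | rfl | rfl
      · exact ⟨pinf, pinf_mem F, hg1⟩
      · exact ⟨pzero, pzero_mem F, hg2⟩
      · exact ⟨pone, pone_mem F, hg3⟩
    refine ⟨pmap g '' SF F, ⟨⟨g, by rw [hSF]; rfl⟩, hTsub⟩, ?_⟩
    rintro B' ⟨⟨g', rfl⟩, hsub'⟩
    have himg' : Projectivization.map g'.toLinearMap g'.injective '' S = pmap g' '' SF F := by
      rw [hSF]; rfl
    rw [himg'] at hsub' ⊢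
    exact blocks_eq F g' g t1 t2 t3 h12 h13 h23
      ⟨hsub' (by simp), hsub' (by simp), hsub' (by simp)⟩
      ⟨hTsub (by simp), hTsub (by simp), hTsub (by simp)⟩
end
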